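/- Let x be chosen uniformly at random from the k-dimensional ℓ_p unit sphere {x : ‖x‖_p = 1} for p ≥ 1 and k ≥ 2. Then E[‖x‖_∞] ≤ 5 (log k)^{1/p} / k^{1/p}. -/

import Mathlib

set_option maxHeartbeats 1000000

open Real

lemma aux_mink (p : ℝ) (hp : 1 ≤ p) {c u v : ℝ} (hc : 0 ≤ c) (hv : 0 ≤ v) (huv : v ≤ u) :
    (c + u ^ p) ^ (1/p) ≤ (c + v ^ p) ^ (1/p) + (u - v) := by
  have hp0 : p ≠ 0 := by positivity
  have h := Real.Lp_add_le_of_nonneg (s := (Finset.univ : Finset (Fin 2)))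
    (f := ![c ^ (1/p), v]) (g := ![0, u - v]) hp
    (by intro i _; fin_cases i <;> simp <;> positivity)
    (by intro i _; fin_cases i <;> simp [sub_nonneg.2 huv])
  simp only [Fin.sum_univ_two, Matrix.cons_val_zero, Matrix.cons_val_one, Matrix.head_cons,
    add_zero, zero_add] at h
  rw [one_div, rpow_inv_rpow hc hp0, zero_rpow hp0, zero_add,
    rpow_rpow_inv (sub_nonneg.2 huv) hp0] at h
  rw [show v + (u - v) = u by ring] at h
  simpa [one_div] using h

-- Lipschitz bound for g(u) = (c + (1-c) u^p)^(1/p), u, v ≥ 0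
lemma aux_lip (p : ℝ) (hp : 1 ≤ p) {c u v : ℝ} (hc : 0 ≤ c) (hc1 : c ≤ 1)
    (hu : 0 ≤ u) (hv : 0 ≤ v) :
    |(c + (1-c) * u ^ p) ^ (1/p) - (c + (1-c) * v ^ p) ^ (1/p)|
      ≤ (1-c) ^ (1/p) * |u - v| := by
  have hp0 : p ≠ 0 := by positivity
  have h1c : (0:ℝ) ≤ 1 - c := by linarith
  have key : ∀ a b : ℝ, 0 ≤ b → b ≤ a →
      (c + (1-c) * a ^ p) ^ (1/p) - (c + (1-c) * b ^ p) ^ (1/p) ≤ (1-c) ^ (1/p) * (a - b) := by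
    intro a b hb hba
    have ha : 0 ≤ a := hb.trans hba
    have e1 : (1-c) * a ^ p = ((1-c) ^ (1/p) * a) ^ p := by
      rw [mul_rpow (by positivity) ha, one_div, rpow_inv_rpow h1c hp0]
    have e2 : (1-c) * b ^ p = ((1-c) ^ (1/p) * b) ^ p := by
      rw [mul_rpow (by positivity) hb, one_div, rpow_inv_rpow h1c hp0]
    have := aux_mink p hp (c := c) (u := (1-c) ^ (1/p) * a) (v := (1-c) ^ (1/p) * b) hc
      (by positivity) (by gcongr)
    rw [← e1, ← e2] at this
    nlinarith [this]
  rcases le_total v u with hvu | huv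
  · rw [abs_of_nonneg (sub_nonneg.2 hvu), abs_of_nonneg]
    · exact key u v hv hvu
    · have : (c + (1-c) * v ^ p) ≤ (c + (1-c) * u ^ p) := by
        have : v ^ p ≤ u ^ p := rpow_le_rpow hv hvu (by linarith)
        nlinarith
      have := rpow_le_rpow (by positivity) this (by positivity : (0:ℝ) ≤ 1/p)
      linarith
  · rw [abs_sub_comm, abs_sub_comm u v, abs_of_nonneg (sub_nonneg.2 huv), abs_of_nonneg]
    · exact key v u hu huv
    · have : (c + (1-c) * u ^ p) ≤ (c + (1-c) * v ^ p) := by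
        have : u ^ p ≤ v ^ p := rpow_le_rpow hu huv (by linarith)
        nlinarith
      have := rpow_le_rpow (by positivity) this (by positivity : (0:ℝ) ≤ 1/p)
      linarith

open MeasureTheory

lemma cap_bound (k : ℕ) (hk : 2 ≤ k) (p : ℝ) (hp : 1 ≤ p) (i : Fin k) (t : ℝ)
    (ht0 : 0 < t) (ht1 : t ^ p < 1) (ε : ℝ) (hε : ε = 1 ∨ ε = -1) :
    μH[(k:ℝ)-1] {x : EuclideanSpace ℝ (Fin k) | (∑ j, |x j| ^ p) ^ (1/p) = 1 ∧ t ≤ ε * x i}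
      ≤ ENNReal.ofReal ((1 - t^p) ^ (1/p)) ^ ((k:ℝ)-1) *
        μH[(k:ℝ)-1] {x : EuclideanSpace ℝ (Fin k) | (∑ j, |x j| ^ p) ^ (1/p) = 1} := by
  have hp0 : p ≠ 0 := by positivity
  have hppos : (0:ℝ) < p := by positivity
  set c : ℝ := t ^ p with hc
  have hc0 : 0 < c := rpow_pos_of_pos ht0 p
  have h1c : (0:ℝ) < 1 - c := by linarith
  set lam : ℝ := (1 - c) ^ (1/p) with hlam
  have hlam0 : 0 < lam := rpow_pos_of_pos h1c _
  have hlamp : lam ^ p = 1 - c := by rw [hlam, one_div, rpow_inv_rpow h1c.le hp0]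
  have hεsq : ε * ε = 1 := by rcases hε with h | h <;> rw [h] <;> norm_num
  have hεabs : |ε| = 1 := by rcases hε with h | h <;> rw [h] <;> norm_num
  set Φ : EuclideanSpace ℝ (Fin k) → EuclideanSpace ℝ (Fin k) :=
    fun x => WithLp.toLp 2 (fun j => if j = i then ε * (c + (1-c) * (ε * x i) ^ p) ^ (1/p) else lam * x j) with hΦ
  have hlip : LipschitzOnWith (Real.toNNReal lam) Φ {x | 0 ≤ ε * x i} := by
    apply LipschitzOnWith.of_dist_le_mul
    intro x hx y hy
    rw [Real.coe_toNNReal _ hlam0.le, EuclideanSpace.dist_eq, EuclideanSpace.dist_eq,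
      ← Real.sqrt_sq hlam0.le, ← Real.sqrt_mul (sq_nonneg lam), Finset.mul_sum]
    apply Real.sqrt_le_sqrt
    apply Finset.sum_le_sum
    intro j _
    have base : dist (Φ x j) (Φ y j) ≤ lam * dist (x j) (y j) := by
      by_cases hj : j = i
      · subst hj
        simp only [hΦ, if_pos rfl, ↓reduceIte]
        rw [Real.dist_eq, Real.dist_eq, ← mul_sub, abs_mul, hεabs, one_mul]
        have := aux_lip p hp (c := c) hc0.le (by linarith) hx hy
        calc |(c + (1-c) * (ε * x j) ^ p) ^ (1/p) - (c + (1-c) * (ε * y j) ^ p) ^ (1/p)|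
            ≤ lam * |ε * x j - ε * y j| := this
          _ = lam * |x j - y j| := by rw [← mul_sub, abs_mul, hεabs, one_mul]
      · simp only [hΦ, if_neg hj]
        rw [Real.dist_eq, Real.dist_eq, ← mul_sub, abs_mul, abs_of_pos hlam0]
    calc dist (Φ x j) (Φ y j) ^ 2 ≤ (lam * dist (x j) (y j)) ^ 2 := by
          apply pow_le_pow_left₀ dist_nonneg base
      _ = lam ^ 2 * dist (x j) (y j) ^ 2 := by ring
  have himg : {x : EuclideanSpace ℝ (Fin k) | (∑ j, |x j| ^ p) ^ (1/p) = 1 ∧ t ≤ ε * x i}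
      ⊆ Φ '' ({x : EuclideanSpace ℝ (Fin k) | (∑ j, |x j| ^ p) ^ (1/p) = 1 ∧ 0 ≤ ε * x i}) := by
    rintro z ⟨hz1, hz2⟩
    have hzi0 : 0 ≤ ε * z i := le_trans ht0.le hz2
    have hsum0 : 0 ≤ ∑ j, |z j| ^ p :=
      Finset.sum_nonneg fun j _ => rpow_nonneg (abs_nonneg _) _
    have sum1 : ∑ j, |z j| ^ p = 1 := by
      have := congrArg (· ^ p) hz1
      simpa [one_div, rpow_inv_rpow hsum0 hp0, one_rpow] using this
    have hnum : 0 ≤ (ε * z i) ^ p - c := by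
      have : c ≤ (ε * z i) ^ p := rpow_le_rpow ht0.le hz2 hppos.le
      linarith
    set w : ℝ := (((ε * z i) ^ p - c)/(1-c)) ^ (1/p) with hw
    have hw0 : 0 ≤ w := rpow_nonneg (by positivity) _
    have hwp : w ^ p = ((ε * z i) ^ p - c)/(1-c) := by
      rw [hw, one_div, rpow_inv_rpow (by positivity) hp0]
    refine ⟨WithLp.toLp 2 (fun j => if j = i then ε * w else z j / lam), ⟨?_, ?_⟩, ?_⟩
    · -- sum = 1
      have hxj : ∀ j ∈ Finset.univ.erase i, |if j = i then ε * w else z j / lam| ^ p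
          = |z j| ^ p / (1-c) := by
        intro j hj
        rw [if_neg (Finset.ne_of_mem_erase hj), abs_div, abs_of_pos hlam0, div_rpow (abs_nonneg _) hlam0.le,
          hlamp]
      have hsplit : ∀ f : Fin k → ℝ, ∑ j, f j = f i + ∑ j ∈ Finset.univ.erase i, f j := by
        intro f
        exact (Finset.add_sum_erase Finset.univ f (Finset.mem_univ i)).symm
      have hzi : |z i| ^ p = (ε * z i) ^ p := by
        rw [← abs_of_nonneg hzi0, abs_mul, hεabs, one_mul]
      have : ∑ j, |if j = i then ε * w else z j / lam| ^ p = 1 := by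
        rw [hsplit, Finset.sum_congr rfl hxj, if_pos rfl, abs_mul, hεabs, one_mul,
          abs_of_nonneg hw0, hwp, ← Finset.sum_div]
        have herase : ∑ j ∈ Finset.univ.erase i, |z j| ^ p = 1 - (ε * z i) ^ p := by
          have := hsplit (fun j => |z j| ^ p)
          rw [sum1, hzi] at this
          linarith
        rw [herase]
        field_simp
        ring
      rw [this, one_rpow]
    · simp only [eq_self_iff_true, if_true, ← mul_assoc, hεsq, one_mul]; exact hw0
    · ext j
      by_cases hj : j = i
      · subst hj
        simp only [hΦ, eq_self_iff_true, if_true, ← mul_assoc, hεsq, one_mul]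
        have : c + (1 - c) * w ^ p = (ε * z j) ^ p := by
          rw [hwp]; field_simp; ring
        rw [this, one_div, rpow_rpow_inv hzi0 hp0, ← mul_assoc, hεsq, one_mul]
      · simp only [hΦ, if_neg hj]
        field_simp
  have hd : (0:ℝ) ≤ (k:ℝ) - 1 := by
    have : (2:ℝ) ≤ (k:ℝ) := by exact_mod_cast hk
    linarith
  calc μH[(k:ℝ)-1] {x : EuclideanSpace ℝ (Fin k) | (∑ j, |x j| ^ p) ^ (1/p) = 1 ∧ t ≤ ε * x i}
      ≤ μH[(k:ℝ)-1] (Φ '' ({x : EuclideanSpace ℝ (Fin k) |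
          (∑ j, |x j| ^ p) ^ (1/p) = 1 ∧ 0 ≤ ε * x i})) := measure_mono himg
    _ ≤ (Real.toNNReal lam : ENNReal) ^ ((k:ℝ)-1) * μH[(k:ℝ)-1] {x : EuclideanSpace ℝ (Fin k) |
          (∑ j, |x j| ^ p) ^ (1/p) = 1 ∧ 0 ≤ ε * x i} := by
        apply LipschitzOnWith.hausdorffMeasure_image_le _ hd
        exact hlip.mono (fun x hx => hx.2)
    _ ≤ ENNReal.ofReal ((1 - t^p) ^ (1/p)) ^ ((k:ℝ)-1) *
        μH[(k:ℝ)-1] {x : EuclideanSpace ℝ (Fin k) | (∑ j, |x j| ^ p) ^ (1/p) = 1} := by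
        apply mul_le_mul'
        · rfl
        · exact measure_mono (fun x hx => hx.1)

theorem stmt_18 (k : ℕ) (hk : 2 ≤ k) (p : ℝ) (hp : 1 ≤ p) :
    ∫⁻ x in {x : EuclideanSpace ℝ (Fin k) | (∑ i, |x i| ^ p) ^ (1 / p) = 1},
        ENNReal.ofReal (⨆ i, |x i|) ∂μH[(k : ℝ) - 1] ≤
      ENNReal.ofReal (5 * (Real.log k) ^ (1 / p) / (k : ℝ) ^ (1 / p)) *
        μH[(k : ℝ) - 1] {x : EuclideanSpace ℝ (Fin k) | (∑ i, |x i| ^ p) ^ (1 / p) = 1} := by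
  have hp0 : p ≠ 0 := by positivity
  have hppos : (0:ℝ) < p := by positivity
  haveI : Nonempty (Fin k) := ⟨⟨0, by omega⟩⟩
  set S := {x : EuclideanSpace ℝ (Fin k) | (∑ i, |x i| ^ p) ^ (1 / p) = 1} with hS
  have hk0 : (0:ℝ) < k := by
    have : (2:ℝ) ≤ (k:ℝ) := by exact_mod_cast hk
    linarith
  have hk1 : (1:ℝ) < (k:ℝ) := by
    have : (2:ℝ) ≤ (k:ℝ) := by exact_mod_cast hk
    linarith
  have hlogk : 0 < Real.log k := Real.log_pos hk1
  -- coordinates are continuous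
  have hcont : ∀ j : Fin k, Continuous fun x : EuclideanSpace ℝ (Fin k) => x j :=
    fun j => (continuous_apply j).comp (PiLp.continuous_ofLp (p := 2) (β := fun _ : Fin k => ℝ))
  have hScont : Continuous fun x : EuclideanSpace ℝ (Fin k) => (∑ i, |x i| ^ p) ^ (1/p) := by
    apply Continuous.rpow_const
    · exact continuous_finset_sum _ fun j _ =>
        ((hcont j).abs).rpow_const (fun x => Or.inr hppos.le)
    · exact fun x => Or.inr (by positivity)
  have hSmeas : MeasurableSet S :=
    (isClosed_singleton.preimage hScont).measurableSet
  -- sup bound on S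
  have hsum1 : ∀ x ∈ S, ∑ j, |x j| ^ p = 1 := by
    intro x hx
    have hsum0 : 0 ≤ ∑ j, |x j| ^ p :=
      Finset.sum_nonneg fun j _ => Real.rpow_nonneg (abs_nonneg _) _
    have := congrArg (· ^ p) hx
    simpa [one_div, Real.rpow_inv_rpow hsum0 hp0, Real.one_rpow] using this
  have hsup1 : ∀ x ∈ S, (⨆ i, |x i|) ≤ 1 := by
    intro x hx
    apply ciSup_le
    intro j
    have h1 : |x j| ^ p ≤ ∑ j, |x j| ^ p :=
      Finset.single_le_sum (f := fun j => |x j| ^ p)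
        (fun j _ => Real.rpow_nonneg (abs_nonneg _) _) (Finset.mem_univ j)
    rw [hsum1 x hx] at h1
    calc |x j| = (|x j| ^ p) ^ (1/p) := by
          rw [one_div, Real.rpow_rpow_inv (abs_nonneg _) hp0]
      _ ≤ 1 ^ (1/p) := Real.rpow_le_rpow (Real.rpow_nonneg (abs_nonneg _) _) h1 (by positivity)
      _ = 1 := Real.one_rpow _
  set cr : ℝ := 5 * (Real.log k) ^ (1 / p) / (k : ℝ) ^ (1 / p) with hcr
  -- trivial bound when 1 ≤ cr
  have triv : 1 ≤ cr → ∫⁻ x in S, ENNReal.ofReal (⨆ i, |x i|) ∂μH[(k : ℝ) - 1]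
      ≤ ENNReal.ofReal cr * μH[(k : ℝ) - 1] S := by
    intro h1
    calc ∫⁻ x in S, ENNReal.ofReal (⨆ i, |x i|) ∂μH[(k : ℝ) - 1]
        ≤ ∫⁻ _ in S, 1 ∂μH[(k : ℝ) - 1] := by
          apply setLIntegral_mono' hSmeas
          intro x hx
          exact ENNReal.ofReal_le_one.2 (hsup1 x hx)
      _ = 1 * μH[(k : ℝ) - 1] S := by rw [setLIntegral_const]
      _ ≤ ENNReal.ofReal cr * μH[(k : ℝ) - 1] S := by
          apply mul_le_mul_left
          exact ENNReal.one_le_ofReal.2 h1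
  rcases le_or_gt 1 cr with h1 | hcrlt
  · exact triv h1
  -- main case
  have hkm1 : (0:ℝ) < (k:ℝ) - 1 := by linarith
  have hd0 : (0:ℝ) ≤ (k:ℝ) - 1 := hkm1.le
  set v : ℝ := (Real.log k / k) ^ (1/p) with hv
  have hv0 : 0 < v := Real.rpow_pos_of_pos (by positivity) _
  have hcr5v : cr = 5 * v := by
    rw [hcr, hv, Real.div_rpow hlogk.le hk0.le]; ring
  have hlk1 : Real.log k / k ≤ 1 := by
    have := Real.log_le_sub_one_of_pos hk0
    rw [div_le_one hk0]; linarith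
  have hvlog : Real.log k / k ≤ v := by
    have h := Real.rpow_le_rpow_of_exponent_ge (show 0 < Real.log k / k by positivity) hlk1
      (show 1/p ≤ 1 by rw [div_le_one hppos]; exact hp)
    rw [Real.rpow_one] at h
    exact h
  have hv15 : v < 1/5 := by rw [hcr5v] at hcrlt; linarith
  have h5pow : (0:ℝ) < 5 ^ p := Real.rpow_pos_of_pos (by norm_num) _
  have hlt5 : Real.log k / k < 1 / 5 ^ p := by
    have h := Real.rpow_lt_rpow hv0.le hv15 hppos
    rw [hv, one_div (p), Real.rpow_inv_rpow (by positivity) hp0] at h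
    calc Real.log k / k < (1/5) ^ p := h
      _ = 1 / 5 ^ p := by rw [Real.div_rpow (by norm_num) (by norm_num), Real.one_rpow]
  have hlogk5 : 5 * Real.log k < (k:ℝ) := by
    have h5r : (1/5:ℝ) ^ p ≤ 1/5 := by
      have := Real.rpow_le_rpow_of_exponent_ge (by norm_num : (0:ℝ) < 1/5) (by norm_num) hp
      rwa [Real.rpow_one] at this
    have h2 : Real.log k / k < 1/5 := by
      calc Real.log k / k < 1 / 5 ^ p := hlt5
        _ = (1/5)^p := by rw [Real.div_rpow (by norm_num) (by norm_num), Real.one_rpow]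
        _ ≤ 1/5 := h5r
    rw [div_lt_div_iff₀ hk0 (by norm_num)] at h2
    linarith
  have hl2 := Real.log_two_gt_d9
  have hk5 : 5 ≤ k := by
    by_contra hlt
    push_neg at hlt
    interval_cases k
    · norm_num at hlogk5; nlinarith
    · have h23 : Real.log 2 ≤ Real.log 3 := Real.log_le_log (by norm_num) (by norm_num)
      norm_num at hlogk5; nlinarith
    · have h4 : Real.log 4 = 2 * Real.log 2 := by
        rw [show (4:ℝ) = 2^(2:ℕ) by norm_num, Real.log_pow]; push_cast; ring
      norm_num at hlogk5; nlinarith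
  have hk5r : (5:ℝ) ≤ (k:ℝ) := by exact_mod_cast hk5
  have hlog4 : 1 ≤ Real.log 4 := by
    rw [Real.le_log_iff_exp_le (by norm_num : (0:ℝ) < 4)]
    exact le_of_lt (lt_of_lt_of_le Real.exp_one_lt_d9 (by norm_num))
  have bern : ∀ b : ℝ, 4 ≤ b → b * p ≤ b ^ p := by
    intro b hb
    have hbpos : (0:ℝ) < b := by linarith
    have hlb : 1 ≤ Real.log b := le_trans hlog4 (Real.log_le_log (by norm_num) hb)
    have h1 : b ^ p = b * b ^ (p-1) := by
      have e : (1:ℝ) + (p-1) = p := by ring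
      nth_rewrite 1 [← e]
      rw [Real.rpow_add hbpos, Real.rpow_one]
    have h2 : b ^ (p-1) = Real.exp (Real.log b * (p-1)) := Real.rpow_def_of_pos hbpos _
    have h3 : Real.log b * (p-1) + 1 ≤ Real.exp (Real.log b * (p-1)) := Real.add_one_le_exp _
    have h4 : p ≤ b ^ (p-1) := by rw [h2]; nlinarith
    calc b * p ≤ b * b ^ (p-1) := by nlinarith
      _ = b ^ p := h1.symm
  have bern4 : 4 * p ≤ 4 ^ p := bern 4 (by norm_num)
  have bern5 : 5 * p ≤ 5 ^ p := bern 5 (by norm_num)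
  set t0 : ℝ := (3 * p * Real.log k / ((k:ℝ) - 1)) ^ (1/p) with ht0def
  have ht0pos : 0 < t0 := Real.rpow_pos_of_pos (by positivity) _
  have ht0p : t0 ^ p = 3 * p * Real.log k / ((k:ℝ) - 1) := by
    rw [ht0def, one_div, Real.rpow_inv_rpow (by positivity) hp0]
  have hk54 : (k:ℝ)/((k:ℝ)-1) ≤ 5/4 := by
    rw [div_le_div_iff₀ hkm1 (by norm_num)]; linarith
  have ht0p1 : t0 ^ p < 1 := by
    rw [ht0p]
    have hlk : Real.log k < (k:ℝ) / 5 ^ p := by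
      rw [div_lt_div_iff₀ hk0 h5pow] at hlt5
      rw [lt_div_iff₀ h5pow]; linarith
    calc 3 * p * Real.log k / ((k:ℝ) - 1) < 3 * p * ((k:ℝ) / 5^p) / ((k:ℝ) - 1) := by
          gcongr
      _ = (3 * p / 5^p) * ((k:ℝ)/((k:ℝ)-1)) := by field_simp
      _ ≤ (3 * p / 5^p) * (5/4) := by gcongr
      _ = (15/4) * p / 5^p := by ring
      _ ≤ 1 := by rw [div_le_one h5pow]; linarith [bern5, hppos.le]
  have ht0le : t0 ≤ 4 * v := by
    have h4v : 4 * v = (4^p * (Real.log k / k)) ^ (1/p) := by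
      rw [Real.mul_rpow (by positivity) (by positivity), hv, one_div,
        Real.rpow_rpow_inv (by norm_num) hp0]
    rw [h4v, ht0def]
    apply Real.rpow_le_rpow (by positivity) ?_ (by positivity)
    have hkey : 3 * p * (k:ℝ) ≤ 4^p * ((k:ℝ) - 1) := by
      have h1 : 3 * p * (k:ℝ) ≤ 4 * p * ((k:ℝ) - 1) := by nlinarith
      have h2 : 4 * p * ((k:ℝ) - 1) ≤ 4^p * ((k:ℝ)-1) := by nlinarith
      linarith
    rw [div_le_iff₀ hkm1]
    have : 4^p * (Real.log k / k) * ((k:ℝ)-1) = (4^p * ((k:ℝ)-1)) * (Real.log k / k) := by ring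
    rw [this]
    calc 3 * p * Real.log k = (3 * p * (k:ℝ)) * (Real.log k / k) := by field_simp
      _ ≤ (4^p * ((k:ℝ)-1)) * (Real.log k / k) := by gcongr
  -- measurable caps
  have hA : ∀ i : Fin k, MeasurableSet {x : EuclideanSpace ℝ (Fin k) | t0 ≤ |x i|} :=
    fun i => (isClosed_Ici.preimage ((hcont i).abs)).measurableSet
  -- pointwise bound
  have hpt : ∀ x ∈ S, ENNReal.ofReal (⨆ i, |x i|) ≤ ENNReal.ofReal t0 +
      ∑ i, Set.indicator {y : EuclideanSpace ℝ (Fin k) | t0 ≤ |y i|} (fun _ => (1:ENNReal)) x := by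
    intro x hx
    by_cases hex : ∃ i, t0 ≤ |x i|
    · obtain ⟨i, hi⟩ := hex
      have hmem : x ∈ {y : EuclideanSpace ℝ (Fin k) | t0 ≤ |y i|} := hi
      have h1 : (1:ENNReal) ≤ ∑ i', Set.indicator
          {y : EuclideanSpace ℝ (Fin k) | t0 ≤ |y i'|} (fun _ => (1:ENNReal)) x := by
        have hle := Finset.single_le_sum (f := fun i' : Fin k => Set.indicator
            {y : EuclideanSpace ℝ (Fin k) | t0 ≤ |y i'|} (fun _ => (1:ENNReal)) x)
          (fun _ _ => zero_le) (Finset.mem_univ i)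
        simp only [Set.indicator_of_mem hmem] at hle
        exact hle
      calc ENNReal.ofReal (⨆ i, |x i|) ≤ 1 := ENNReal.ofReal_le_one.2 (hsup1 x hx)
        _ ≤ _ := le_add_left h1
    · push_neg at hex
      have hsup : (⨆ i, |x i|) ≤ t0 := ciSup_le fun i => (hex i).le
      calc ENNReal.ofReal (⨆ i, |x i|) ≤ ENNReal.ofReal t0 := ENNReal.ofReal_le_ofReal hsup
        _ ≤ _ := le_self_add
  -- integrate
  have step1 : ∫⁻ x in S, ENNReal.ofReal (⨆ i, |x i|) ∂μH[(k:ℝ) - 1] ≤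
      ENNReal.ofReal t0 * μH[(k:ℝ)-1] S +
      ∑ i : Fin k, μH[(k:ℝ)-1] ({y : EuclideanSpace ℝ (Fin k) | t0 ≤ |y i|} ∩ S) := by
    calc ∫⁻ x in S, ENNReal.ofReal (⨆ i, |x i|) ∂μH[(k:ℝ) - 1]
        ≤ ∫⁻ x in S, (ENNReal.ofReal t0 + ∑ i, Set.indicator
            {y : EuclideanSpace ℝ (Fin k) | t0 ≤ |y i|} (fun _ => (1:ENNReal)) x)
            ∂μH[(k:ℝ) - 1] := setLIntegral_mono' hSmeas hpt
      _ = ENNReal.ofReal t0 * μH[(k:ℝ)-1] S + ∑ i : Fin k,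
            μH[(k:ℝ)-1] ({y : EuclideanSpace ℝ (Fin k) | t0 ≤ |y i|} ∩ S) := by
          rw [lintegral_add_left measurable_const, setLIntegral_const,
            lintegral_finset_sum _ (fun i _ => measurable_const.indicator (hA i))]
          congr 1
          apply Finset.sum_congr rfl
          intro i _
          rw [lintegral_indicator (hA i), setLIntegral_one, Measure.restrict_apply (hA i)]
  -- cap bounds
  set E : ENNReal := ENNReal.ofReal ((1 - t0^p) ^ (1/p)) with hE
  have capsplit : ∀ i : Fin k, μH[(k:ℝ)-1] ({y : EuclideanSpace ℝ (Fin k) | t0 ≤ |y i|} ∩ S)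
      ≤ E ^ ((k:ℝ)-1) * μH[(k:ℝ)-1] S + E ^ ((k:ℝ)-1) * μH[(k:ℝ)-1] S := by
    intro i
    have hsub : {y : EuclideanSpace ℝ (Fin k) | t0 ≤ |y i|} ∩ S ⊆
        {x : EuclideanSpace ℝ (Fin k) | (∑ j, |x j| ^ p) ^ (1/p) = 1 ∧ t0 ≤ 1 * x i} ∪
        {x : EuclideanSpace ℝ (Fin k) | (∑ j, |x j| ^ p) ^ (1/p) = 1 ∧ t0 ≤ (-1) * x i} := by
      rintro x ⟨h1, h2⟩
      have h1' : t0 ≤ |x i| := h1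
      rcases le_abs.1 h1' with h | h
      · left; exact ⟨h2, by rwa [one_mul]⟩
      · right; exact ⟨h2, by rwa [neg_one_mul]⟩
    calc μH[(k:ℝ)-1] ({y : EuclideanSpace ℝ (Fin k) | t0 ≤ |y i|} ∩ S)
        ≤ μH[(k:ℝ)-1] ({x : EuclideanSpace ℝ (Fin k) | (∑ j, |x j| ^ p) ^ (1/p) = 1 ∧ t0 ≤ 1 * x i} ∪
          {x : EuclideanSpace ℝ (Fin k) | (∑ j, |x j| ^ p) ^ (1/p) = 1 ∧ t0 ≤ (-1) * x i}) :=
          measure_mono hsub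
      _ ≤ μH[(k:ℝ)-1] {x : EuclideanSpace ℝ (Fin k) | (∑ j, |x j| ^ p) ^ (1/p) = 1 ∧ t0 ≤ 1 * x i} +
          μH[(k:ℝ)-1] {x : EuclideanSpace ℝ (Fin k) | (∑ j, |x j| ^ p) ^ (1/p) = 1 ∧ t0 ≤ (-1) * x i} :=
          measure_union_le _ _
      _ ≤ E ^ ((k:ℝ)-1) * μH[(k:ℝ)-1] S + E ^ ((k:ℝ)-1) * μH[(k:ℝ)-1] S := by
          apply add_le_add
          · exact cap_bound k hk p hp i t0 ht0pos ht0p1 1 (Or.inl rfl)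
          · exact cap_bound k hk p hp i t0 ht0pos ht0p1 (-1) (Or.inr rfl)
  -- combine
  have hlam0 : (0:ℝ) ≤ 1 - t0^p := by linarith
  have coeff : ENNReal.ofReal t0 + (k : ENNReal) * (E ^ ((k:ℝ)-1) + E ^ ((k:ℝ)-1))
      ≤ ENNReal.ofReal cr := by
    have hEd : E ^ ((k:ℝ)-1) = ENNReal.ofReal (((1 - t0^p) ^ (1/p)) ^ ((k:ℝ)-1)) := by
      rw [hE, ENNReal.ofReal_rpow_of_nonneg (Real.rpow_nonneg hlam0 _) hd0]
    have hkE : (k : ENNReal) = ENNReal.ofReal (k:ℝ) := by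
      rw [ENNReal.ofReal_natCast]
    rw [hEd, hkE, ← ENNReal.ofReal_add (Real.rpow_nonneg (Real.rpow_nonneg hlam0 _) _)
      (Real.rpow_nonneg (Real.rpow_nonneg hlam0 _) _),
      ← ENNReal.ofReal_mul hk0.le,
      ← ENNReal.ofReal_add ht0pos.le (by positivity)]
    apply ENNReal.ofReal_le_ofReal
    -- real final inequality
    set lamd : ℝ := ((1 - t0^p) ^ (1/p)) ^ ((k:ℝ)-1) with hlamd
    have e1 : lamd = (1 - t0^p) ^ ((1/p) * ((k:ℝ)-1)) := by
      rw [hlamd, Real.rpow_mul hlam0]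
    have e2 : lamd ≤ Real.exp (-(3 * Real.log k)) := by
      rw [e1]
      calc (1 - t0^p) ^ ((1/p) * ((k:ℝ)-1))
          ≤ Real.exp (-(t0^p)) ^ ((1/p) * ((k:ℝ)-1)) := by
            apply Real.rpow_le_rpow hlam0 _ (by positivity)
            have := Real.add_one_le_exp (-(t0^p))
            linarith
        _ = Real.exp (-(t0^p) * ((1/p) * ((k:ℝ)-1))) := (Real.exp_mul _ _).symm
        _ = Real.exp (-(3 * Real.log k)) := by
            congr 1
            rw [ht0p]
            field_simp
    have e3 : Real.exp (-(3 * Real.log k)) = ((k:ℝ)^(3:ℕ))⁻¹ := by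
      rw [show -(3 * Real.log k) = Real.log k * (-(3:ℝ)) by ring, ← Real.rpow_def_of_pos hk0,
        Real.rpow_neg hk0.le, show ((3:ℝ)) = ((3:ℕ):ℝ) by norm_num, Real.rpow_natCast]
    have hlamdle : lamd ≤ ((k:ℝ)^(3:ℕ))⁻¹ := by rw [← e3]; exact e2
    have hklam : (k:ℝ) * (lamd + lamd) ≤ 2 / (k:ℝ)^2 := by
      calc (k:ℝ) * (lamd + lamd) ≤ (k:ℝ) * (((k:ℝ)^(3:ℕ))⁻¹ + ((k:ℝ)^(3:ℕ))⁻¹) := by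
            gcongr
        _ = 2 / (k:ℝ)^2 := by field_simp; ring
    have h2k2 : 2 / (k:ℝ)^2 ≤ v := by
      have hlog1 : 1 ≤ Real.log k :=
        le_trans hlog4 (Real.log_le_log (by norm_num) (by linarith))
      have h1 : 2 / (k:ℝ)^2 ≤ Real.log k / k := by
        rw [div_le_div_iff₀ (by positivity) hk0]
        nlinarith
      linarith
    rw [hcr5v]
    linarith
  calc ∫⁻ x in S, ENNReal.ofReal (⨆ i, |x i|) ∂μH[(k:ℝ) - 1]
      ≤ ENNReal.ofReal t0 * μH[(k:ℝ)-1] S +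
        ∑ i : Fin k, μH[(k:ℝ)-1] ({y : EuclideanSpace ℝ (Fin k) | t0 ≤ |y i|} ∩ S) := step1
    _ ≤ ENNReal.ofReal t0 * μH[(k:ℝ)-1] S +
        ∑ _i : Fin k, (E ^ ((k:ℝ)-1) * μH[(k:ℝ)-1] S + E ^ ((k:ℝ)-1) * μH[(k:ℝ)-1] S) :=
        add_le_add_right (Finset.sum_le_sum fun i _ => capsplit i) _
    _ = (ENNReal.ofReal t0 + (k : ENNReal) * (E ^ ((k:ℝ)-1) + E ^ ((k:ℝ)-1))) * μH[(k:ℝ)-1] S := by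
        rw [Finset.sum_const, Finset.card_univ, Fintype.card_fin, nsmul_eq_mul]
        ring
    _ ≤ ENNReal.ofReal cr * μH[(k:ℝ)-1] S := mul_le_mul_left coeff _
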